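/- arXiv:1904.12461 — 3 statements merged into one kernel-verified Lean document; each statement's English description precedes it below -/
import Mathlib

section
/- Let a compact group G act continuously on the right of a locally compact Polish metric space (X,d) by isometries, let p : X → X/G be the quotient map onto the orbit space X/G equipped with the metric d_{X/G}(x*,y*) = inf_{g∈G} d(xg,y), and let q ≥ 1. Then the push-forward map p_♯ : M_q(X) → M_q(X/G) is onto; moreover, for every ν* ∈ M_q(X/G) there exists a G-invariant measure μ ∈ M_q^G(X) with p_♯μ = ν*. -/
open MeasureTheory ENNReal

section GW

variable {X : Type*} [MeasurableSpace X] [MetricSpace X]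

/-- A transference plan between two finite measures `μ` and `ν` of equal mass:
a Borel probability measure `π` on `X × X` with `|μ| π(A × X) = μ A` and
`|ν| π(X × B) = ν B`. -/
def IsCoupling (μ ν : Measure X) (π : Measure (X × X)) : Prop :=
  IsProbabilityMeasure π ∧
  (∀ A : Set X, MeasurableSet A → μ Set.univ * π (A ×ˢ (Set.univ : Set X)) = μ A) ∧
  (∀ B : Set X, MeasurableSet B → ν Set.univ * π ((Set.univ : Set X) ×ˢ B) = ν B)

/-- The (mass-scaled) `p`-Wasserstein distance
`W_p(μ,ν) = (|μ| ⨅_π ∫ d(x,y)^p dπ)^{1/p}`, as an extended nonnegative real. -/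
noncomputable def WpE (p : ℝ) (μ ν : Measure X) : ℝ≥0∞ :=
  (μ Set.univ * ⨅ π : {π : Measure (X × X) // IsCoupling μ ν π},
      ∫⁻ z, edist z.1 z.2 ^ p ∂(π.1)) ^ (1 / p)

/-- `μ ∈ M_p(X)`: `μ` is a finite (nonnegative Borel) measure with finite `p`-moment. -/
def MemMp (p : ℝ) (μ : Measure X) : Prop :=
  IsFiniteMeasure μ ∧ ∀ x₀ : X, ∫⁻ x, edist x x₀ ^ p ∂μ ≠ ∞

/-- Total variation mass `|μ - ν|` of the difference of two (finite) measures,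
as an extended nonnegative real. -/
noncomputable def tvE (μ ν : Measure X) : ℝ≥0∞ := (μ - ν) Set.univ + (ν - μ) Set.univ

/-- Total variation mass `|μ - ν|` as a real number. -/
noncomputable def tv (μ ν : Measure X) : ℝ := (tvE μ ν).toReal

/-- The generalized Wasserstein distance
`W_p^{a,b}(μ,ν) = inf { a|μ-μ'| + a|ν-ν'| + b W_p(μ',ν') : μ',ν' ∈ M_p(X), |μ'|=|ν'| }`,
as an extended nonnegative real. -/
noncomputable def genWE (a b p : ℝ) (μ ν : Measure X) : ℝ≥0∞ :=
  ⨅ (μ' : Measure X) (ν' : Measure X) (_ : MemMp p μ') (_ : MemMp p ν')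
      (_ : μ' Set.univ = ν' Set.univ),
    ENNReal.ofReal a * tvE μ μ' + ENNReal.ofReal a * tvE ν ν' +
      ENNReal.ofReal b * WpE p μ' ν'

/-- The generalized Wasserstein distance `W_p^{a,b}` as a real number. -/
noncomputable def genW (a b p : ℝ) (μ ν : Measure X) : ℝ := (genWE a b p μ ν).toReal

/-- `I(φ) = inf_{s ≥ 0} (sφ + a|1-s|)`. -/
noncomputable def Idual (a φ : ℝ) : ℝ :=
  sInf {v : ℝ | ∃ s : ℝ, 0 ≤ s ∧ v = s * φ + a * |1 - s|}

end GW


set_option linter.unusedSectionVars false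
section Sel
open Set
variable {X : Type*} [MetricSpace X] {Y : Type*} [MetricSpace Y]

/-- least index `j` such that the fiber of `y` meets `D ∩ closedBall (a j) r`. -/
noncomputable def selIdx (p : X → Y) (a : ℕ → X) (D : Set X) (r : ℝ) (y : Y) : ℕ :=
  sInf {j | y ∈ p '' (D ∩ Metric.closedBall (a j) r)}

/-- closed set determined by a (reversed) list of indices. -/
def selSet (a : ℕ → X) : List ℕ → Set X
  | [] => Set.univ
  | j :: t => selSet a t ∩ Metric.closedBall (a j) ((1/2 : ℝ) ^ t.length)

/-- reversed list of chosen indices after `n` steps. -/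
noncomputable def selList (p : X → Y) (a : ℕ → X) : ℕ → Y → List ℕ
  | 0, _ => []
  | (n+1), y =>
      selIdx p a (selSet a (selList p a n y)) ((1/2 : ℝ) ^ n) y :: selList p a n y

lemma selSet_isClosed (a : ℕ → X) (l : List ℕ) : IsClosed (selSet a l) := by
  induction l with
  | nil => exact isClosed_univ
  | cons j t ih => exact ih.inter Metric.isClosed_closedBall

lemma selList_length (p : X → Y) (a : ℕ → X) (n : ℕ) (y : Y) :
    (selList p a n y).length = n := by
  induction n with
  | zero => rfl
  | succ n ih => simp [selList, ih]

lemma selSet_selList_succ (p : X → Y) (a : ℕ → X) (n : ℕ) (y : Y) :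
    selSet a (selList p a (n+1) y) =
      selSet a (selList p a n y) ∩
        Metric.closedBall (a (selIdx p a (selSet a (selList p a n y)) ((1/2 : ℝ) ^ n) y))
          ((1/2 : ℝ) ^ n) := by
  show selSet a (_ :: _) = _
  rw [selSet, selList_length]

lemma selSet_selList_antitone (p : X → Y) (a : ℕ → X) (n : ℕ) (y : Y) :
    selSet a (selList p a (n+1) y) ⊆ selSet a (selList p a n y) := by
  rw [selSet_selList_succ]; exact Set.inter_subset_left

/-- invariant: fibers keep meeting the chosen sets. -/
lemma selSet_inter_fiber_nonempty (p : X → Y) (a : ℕ → X) (ha : DenseRange a)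
    (hsurj : Function.Surjective p) (n : ℕ) (y : Y) :
    (p ⁻¹' {y} ∩ selSet a (selList p a n y)).Nonempty := by
  induction n with
  | zero =>
      obtain ⟨x, hx⟩ := hsurj y
      exact ⟨x, hx, Set.mem_univ x⟩
  | succ n ih =>
      obtain ⟨x, hxf, hxD⟩ := ih
      have hr : (0:ℝ) < (1/2 : ℝ) ^ n := by positivity
      obtain ⟨j, hj⟩ : ∃ j, dist x (a j) < (1/2 : ℝ) ^ n :=
        Metric.denseRange_iff.1 ha x ((1/2 : ℝ) ^ n) hr
      -- the set of candidate indices is nonempty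
      have hne : {i | y ∈ p '' (selSet a (selList p a n y) ∩
          Metric.closedBall (a i) ((1/2 : ℝ) ^ n))}.Nonempty := by
        refine ⟨j, ⟨x, ⟨hxD, ?_⟩, hxf⟩⟩
        · exact Metric.mem_closedBall.2 hj.le
      obtain ⟨x', hx'⟩ := Nat.sInf_mem hne
      exact ⟨x', hx'.2, by rw [selSet_selList_succ]; exact hx'.1⟩


variable [MeasurableSpace Y] [OpensMeasurableSpace Y]

lemma nat_sInf_eq_iff (S : Set ℕ) (j : ℕ) :
    sInf S = j ↔ (j ∈ S ∧ ∀ i < j, i ∉ S) ∨ (S = ∅ ∧ j = 0) := by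
  constructor
  · rintro rfl
    by_cases hne : S.Nonempty
    · exact Or.inl ⟨Nat.sInf_mem hne, fun i hi => Nat.notMem_of_lt_sInf hi⟩
    · rw [Set.not_nonempty_iff_eq_empty] at hne
      exact Or.inr ⟨hne, by rw [hne]; exact Nat.sInf_empty⟩
  · rintro (⟨hj, hlt⟩ | ⟨hS, rfl⟩)
    · refine le_antisymm (Nat.sInf_le hj) ?_
      by_contra hcon
      push_neg at hcon
      exact hlt _ hcon (Nat.sInf_mem ⟨j, hj⟩)
    · rw [hS]; exact Nat.sInf_empty

lemma selIdx_measurableSet (p : X → Y) (a : ℕ → X) (hclosed : IsClosedMap p)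
    {D : Set X} (hD : IsClosed D) (r : ℝ) (j : ℕ) :
    MeasurableSet {y | selIdx p a D r y = j} := by
  have hA : ∀ i : ℕ, MeasurableSet {y | y ∈ p '' (D ∩ Metric.closedBall (a i) r)} := fun i =>
    (hclosed _ (hD.inter Metric.isClosed_closedBall)).measurableSet
  have key : {y | selIdx p a D r y = j} =
      ({y | y ∈ p '' (D ∩ Metric.closedBall (a j) r)} ∩
        ⋂ i ∈ Set.Iio j, {y | y ∈ p '' (D ∩ Metric.closedBall (a i) r)}ᶜ) ∪
      ((⋂ i : ℕ, {y | y ∈ p '' (D ∩ Metric.closedBall (a i) r)}ᶜ) ∩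
        (if j = 0 then Set.univ else ∅)) := by
    ext y
    have := nat_sInf_eq_iff {i | y ∈ p '' (D ∩ Metric.closedBall (a i) r)} j
    simp only [Set.mem_union, Set.mem_inter_iff, Set.mem_iInter, Set.mem_compl_iff,
      Set.mem_setOf_eq, Set.mem_Iio, Set.eq_empty_iff_forall_notMem] at this ⊢
    rw [show selIdx p a D r y = sInf {i | y ∈ p '' (D ∩ Metric.closedBall (a i) r)} from rfl,
      this]
    constructor
    · rintro (⟨h1, h2⟩ | ⟨h1, rfl⟩)
      · exact Or.inl ⟨h1, h2⟩
      · exact Or.inr ⟨h1, by simp⟩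
    · rintro (⟨h1, h2⟩ | ⟨h1, h2⟩)
      · exact Or.inl ⟨h1, h2⟩
      · refine Or.inr ⟨h1, ?_⟩
        by_cases h0 : j = 0
        · exact h0
        · rw [if_neg h0] at h2; exact absurd h2 (Set.notMem_empty y)
  rw [key]
  refine MeasurableSet.union (MeasurableSet.inter (hA j) ?_) (MeasurableSet.inter ?_ ?_)
  · exact MeasurableSet.biInter (Set.to_countable _) fun i _ => (hA i).compl
  · exact MeasurableSet.iInter fun i => (hA i).compl
  · split
    · exact MeasurableSet.univ
    · exact MeasurableSet.empty

lemma selList_measurableSet (p : X → Y) (a : ℕ → X) (hclosed : IsClosedMap p)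
    (n : ℕ) (l : List ℕ) : MeasurableSet {y | selList p a n y = l} := by
  induction n generalizing l with
  | zero =>
      rcases l with _ | ⟨j, t⟩
      · simp only [selList]; exact MeasurableSet.univ
      · convert MeasurableSet.empty
        ext y; simp [selList]
  | succ n ih =>
      rcases l with _ | ⟨j, t⟩
      · convert MeasurableSet.empty
        ext y; simp [selList]
      · have : {y | selList p a (n+1) y = j :: t} =
            {y | selList p a n y = t} ∩
              {y | selIdx p a (selSet a t) ((1/2 : ℝ) ^ n) y = j} := by
          ext y
          simp only [Set.mem_setOf_eq, Set.mem_inter_iff, selList, List.cons.injEq]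
          constructor
          · rintro ⟨h1, h2⟩; exact ⟨h2, h2 ▸ h1⟩
          · rintro ⟨h1, h2⟩; exact ⟨h1 ▸ h2, h1⟩
        rw [this]
        exact (ih t).inter (selIdx_measurableSet p a hclosed (selSet_isClosed a t) _ j)


theorem exists_measurable_section'
    [TopologicalSpace.SeparableSpace X] [MeasurableSpace X] [BorelSpace X]
    (p : X → Y) (hsurj : Function.Surjective p) (hclosed : IsClosedMap p)
    (hfib : ∀ y : Y, IsCompact (p ⁻¹' {y})) :
    ∃ s : Y → X, Measurable s ∧ ∀ y, p (s y) = y := by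
  by_cases hX : Nonempty X
  · haveI := hX
    set a : ℕ → X := TopologicalSpace.denseSeq X with ha_def
    have ha : DenseRange a := TopologicalSpace.denseRange_denseSeq X
    set C : ℕ → Y → Set X := fun n y => p ⁻¹' {y} ∩ selSet a (selList p a n y) with hC_def
    have hCne : ∀ y n, (C n y).Nonempty := fun y n =>
      selSet_inter_fiber_nonempty p a ha hsurj n y
    have hInter : ∀ y, (⋂ n, C n y).Nonempty := fun y =>
      IsCompact.nonempty_iInter_of_sequence_nonempty_isCompact_isClosed
        (fun n => C n y)
        (fun n => Set.inter_subset_inter_right _ (selSet_selList_antitone p a n y))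
        (fun n => hCne y n)
        ((hfib y).inter_right (selSet_isClosed a _))
        (fun n => ((hfib y).isClosed).inter (selSet_isClosed a _))
    set s : Y → X := fun y => (hInter y).some with hs_def
    have hsC : ∀ y n, s y ∈ C n y := fun y n => Set.mem_iInter.1 (hInter y).some_mem n
    have hps : ∀ y, p (s y) = y := fun y => (hsC y 0).1
    set f : ℕ → Y → X := fun n y => a ((selList p a (n+1) y).headI) with hf_def
    have hfm : ∀ n, Measurable (f n) := by
      intro n
      intro B hB
      have : f n ⁻¹' B =
          ⋃ l ∈ {l : List ℕ | a l.headI ∈ B}, {y | selList p a (n+1) y = l} := by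
        ext y
        simp only [Set.mem_preimage, Set.mem_iUnion, Set.mem_setOf_eq, exists_prop]
        exact ⟨fun h => ⟨selList p a (n+1) y, h, rfl⟩, fun ⟨l, hl, he⟩ => by show a (selList p a (n+1) y).headI ∈ B; rw [he]; exact hl⟩
      rw [this]
      exact MeasurableSet.biUnion (Set.to_countable _)
        fun l _ => selList_measurableSet p a hclosed (n+1) l
    have hdist : ∀ y n, dist (s y) (f n y) ≤ (1/2 : ℝ) ^ n := by
      intro y n
      have h1 : s y ∈ selSet a (selList p a (n+1) y) := (hsC y (n+1)).2
      rw [selSet_selList_succ] at h1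
      have : f n y = a (selIdx p a (selSet a (selList p a n y)) ((1/2 : ℝ) ^ n) y) := rfl
      rw [this]
      exact Metric.mem_closedBall.1 h1.2
    have htend : ∀ y, Filter.Tendsto (fun n => f n y) Filter.atTop (nhds (s y)) := by
      intro y
      rw [tendsto_iff_dist_tendsto_zero]
      have hb : Filter.Tendsto (fun n : ℕ => (1/2 : ℝ) ^ n) Filter.atTop (nhds 0) :=
        tendsto_pow_atTop_nhds_zero_of_lt_one (by norm_num) (by norm_num)
      refine squeeze_zero (g := fun n : ℕ => (1/2 : ℝ) ^ n) (fun n => dist_nonneg)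
        (fun n => ?_) hb
      rw [dist_comm]
      exact hdist y n
    exact ⟨s, measurable_of_tendsto_metrizable hfm (tendsto_pi_nhds.2 htend), hps⟩
  · haveI : IsEmpty X := not_nonempty_iff.1 hX
    haveI : IsEmpty Y := ⟨fun y => by obtain ⟨x, _⟩ := hsurj y; exact hX ⟨x⟩⟩
    exact ⟨isEmptyElim, measurable_of_empty _, fun y => isEmptyElim y⟩

end Sel
section MainAux

lemma ennreal_rpow_add_le (a b : ℝ≥0∞) {q : ℝ} (hq : 0 ≤ q) :
    (a + b) ^ q ≤ 2 ^ q * (a ^ q + b ^ q) := by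
  have h1 : a + b ≤ 2 * max a b := by
    rw [two_mul]
    exact add_le_add (le_max_left a b) (le_max_right a b)
  calc (a + b) ^ q ≤ (2 * max a b) ^ q := ENNReal.rpow_le_rpow h1 hq
    _ = 2 ^ q * (max a b) ^ q := ENNReal.mul_rpow_of_nonneg _ _ hq
    _ ≤ 2 ^ q * (a ^ q + b ^ q) := by
        refine mul_le_mul_right ?_ _
        rcases le_total a b with h | h
        · rw [max_eq_right h]; exact self_le_add_left _ _
        · rw [max_eq_left h]; exact self_le_add_right _ _

end MainAux

/-- **Surjectivity of the push-forward onto `M_q(X/G)`** (Theorem 1.4 (1)).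
For an isometric continuous action of a compact group `G` on a locally compact Polish
metric space `X`, with `p : X → Y = X/G` the quotient map onto the orbit space equipped
with the metric `d(x*,y*) = inf_g d(g•x, y)`, the map `p_♯ : M_q(X) → M_q(X/G)` is
well defined and onto; moreover every `ν* ∈ M_q(X/G)` is the image of some
`G`-invariant `μ ∈ M_q^G(X)`. -/
theorem pushforward_quotient_onto
    {G : Type*} [Group G] [TopologicalSpace G] [IsTopologicalGroup G] [CompactSpace G]
    {X : Type*} [MeasurableSpace X] [MetricSpace X] [BorelSpace X]
    [TopologicalSpace.SeparableSpace X] [CompleteSpace X] [LocallyCompactSpace X]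
    [MulAction G X] [ContinuousSMul G X]
    (hiso : ∀ g : G, Isometry (fun x : X => g • x))
    {Y : Type*} [MeasurableSpace Y] [MetricSpace Y] [BorelSpace Y]
    (p : X → Y) (hp_cont : Continuous p) (hp_surj : Function.Surjective p)
    (hp_dist : ∀ x y : X, dist (p x) (p y) = ⨅ g : G, dist (g • x) y)
    (hp_fib : ∀ x y : X, p x = p y ↔ ∃ g : G, g • x = y)
    (q : ℝ) (hq : 1 ≤ q) :
    (∀ μ : Measure X, MemMp q μ → MemMp q (Measure.map p μ)) ∧
    (∀ ν : Measure Y, MemMp q ν →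
      ∃ μ : Measure X, MemMp q μ ∧
        (∀ g : G, Measure.map (fun x : X => g • x) μ = μ) ∧
        Measure.map p μ = ν) := by
  have hq0 : (0:ℝ) ≤ q := le_trans zero_le_one hq
  have hp_meas : Measurable p := hp_cont.measurable
  haveI : SecondCountableTopology X := UniformSpace.secondCountable_of_separable X
  -- measurability of the integrands
  have hintX : ∀ x₀ : X, Measurable fun x : X => edist x x₀ ^ q := fun x₀ =>
    ENNReal.continuous_rpow_const.measurable.comp (measurable_id.edist measurable_const)
  have hintY : ∀ y₀ : Y, Measurable fun y : Y => edist y y₀ ^ q := fun y₀ =>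
    (ENNReal.continuous_rpow_const.comp (continuous_id.edist continuous_const)).measurable
  -- p is nonexpansive
  have hpne : ∀ x x' : X, edist (p x) (p x') ≤ edist x x' := by
    intro x x'
    rw [edist_dist, edist_dist]
    refine ENNReal.ofReal_le_ofReal ?_
    rw [hp_dist]
    have hbdd : BddBelow (Set.range fun g : G => dist (g • x) x') := by
      refine ⟨0, ?_⟩; rintro _ ⟨g, rfl⟩; exact dist_nonneg
    calc ⨅ g : G, dist (g • x) x' ≤ dist ((1:G) • x) x' := ciInf_le hbdd 1
      _ = dist x x' := by rw [one_smul]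
  constructor
  · -- part 1: `p_♯` maps `M_q(X)` into `M_q(Y)`
    intro μ hμ
    haveI : IsFiniteMeasure μ := hμ.1
    refine ⟨⟨?_⟩, ?_⟩
    · rw [Measure.map_apply hp_meas MeasurableSet.univ, Set.preimage_univ]
      exact measure_lt_top μ _
    · intro y₀
      obtain ⟨x₀, rfl⟩ := hp_surj y₀
      rw [lintegral_map (hintY (p x₀)) hp_meas]
      refine ne_top_of_le_ne_top (hμ.2 x₀) (lintegral_mono fun x => ?_)
      exact ENNReal.rpow_le_rpow (hpne x x₀) hq0
  · -- part 2: surjectivity with a `G`-invariant preimage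
    intro ν hν
    haveI : IsFiniteMeasure ν := hν.1
    -- fibers of p are compact
    have hfib_cpt : ∀ y : Y, IsCompact (p ⁻¹' {y}) := by
      intro y
      obtain ⟨x₀, rfl⟩ := hp_surj y
      have : p ⁻¹' {p x₀} = Set.range (fun g : G => g • x₀) := by
        ext z
        simp only [Set.mem_preimage, Set.mem_singleton_iff, Set.mem_range]
        constructor
        · intro h
          obtain ⟨g, hg⟩ := (hp_fib z x₀).1 h
          exact ⟨g⁻¹, by rw [← hg, inv_smul_smul]⟩
        · rintro ⟨g, rfl⟩
          exact (hp_fib (g • x₀) x₀).2 ⟨g⁻¹, inv_smul_smul g x₀⟩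
      rw [this]
      exact isCompact_range (continuous_id.smul continuous_const)
    -- p is a closed map
    have hclosed : IsClosedMap p := by
      intro F hF
      refine IsSeqClosed.isClosed ?_
      intro yseq y hyseq hyto
      choose xseq hxF hxp using hyseq
      obtain ⟨xb, hxb⟩ := hp_surj y
      have hchoose : ∀ n : ℕ, ∃ g : G,
          dist (g • xseq n) xb < dist (yseq n) y + 1/((n:ℝ)+1) := by
        intro n
        apply exists_lt_of_ciInf_lt
        rw [← hp_dist, hxp, hxb]
        exact lt_add_of_pos_right _ (by positivity)
      choose gseq hg using hchoose
      set zseq : ℕ → X := fun n => gseq n • xseq n with hzseq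
      have hzto : Filter.Tendsto zseq Filter.atTop (nhds xb) := by
        rw [tendsto_iff_dist_tendsto_zero]
        have h1 : Filter.Tendsto (fun n => dist (yseq n) y) Filter.atTop (nhds 0) :=
          tendsto_iff_dist_tendsto_zero.1 hyto
        have h2 := tendsto_one_div_add_atTop_nhds_zero_nat (𝕜 := ℝ)
        refine squeeze_zero (g := fun n => dist (yseq n) y + 1/((n:ℝ)+1))
          (fun n => dist_nonneg) (fun n => (hg n).le) ?_
        simpa using h1.add h2
      set K : Set X :=
        (fun q : G × X => q.1⁻¹ • q.2) '' (Set.univ ×ˢ insert xb (Set.range zseq)) with hK_def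
      have hK : IsCompact K :=
        ((isCompact_univ.prod hzto.isCompact_insert_range).image
          ((continuous_fst.inv).smul continuous_snd))
      have hxK : ∀ n, xseq n ∈ K ∩ F := by
        intro n
        refine ⟨⟨(gseq n, zseq n), ⟨Set.mem_univ _, Set.mem_insert_of_mem _ ⟨n, rfl⟩⟩, ?_⟩,
          hxF n⟩
        exact inv_smul_smul _ _
      obtain ⟨xl, hxl, φ, hφ, hto⟩ := (hK.inter_right hF).tendsto_subseq hxK
      refine ⟨xl, hxl.2, ?_⟩
      have h1 : Filter.Tendsto (fun n => p (xseq (φ n))) Filter.atTop (nhds (p xl)) :=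
        (hp_cont.tendsto xl).comp hto
      have h2 : Filter.Tendsto (fun n => p (xseq (φ n))) Filter.atTop (nhds y) := by
        have := hyto.comp hφ.tendsto_atTop
        simpa [Function.comp_def, hxp] using this
      exact tendsto_nhds_unique h1 h2
    -- measurable section of p
    obtain ⟨s, hs_meas, hs_sec⟩ := exists_measurable_section' p hp_surj hclosed hfib_cpt
    -- the Hausdorff quotient of G, with its Haar probability measure
    set Q := SeparationQuotient G with hQ
    letI : MeasurableSpace Q := borel Q
    haveI : BorelSpace Q := ⟨rfl⟩
    haveI : CompactSpace Q := ⟨by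
      rw [← SeparationQuotient.surjective_mk.range_eq]
      exact isCompact_range SeparationQuotient.continuous_mk⟩
    haveI : IsTopologicalGroup Q := ⟨⟩
    set κ : Measure Q := Measure.haarMeasure (⊤ : TopologicalSpace.PositiveCompacts Q) with hκ
    haveI : IsProbabilityMeasure κ := ⟨by
      rw [hκ, ← TopologicalSpace.PositiveCompacts.coe_top (α := Q)]
      exact Measure.haarMeasure_self⟩
    haveI : κ.IsMulLeftInvariant := by rw [hκ]; infer_instance
    -- the induced action of Q on X
    have hlift : ∀ x : X, ∀ g g' : G, Inseparable g g' → g • x = g' • x := fun x g g' h =>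
      (h.map (continuous_id.smul continuous_const)).eq
    set A : Q → X → X := fun ω x => SeparationQuotient.lift (fun g => g • x) (hlift x) ω
      with hA_def
    have hA_cont : Continuous (fun z : Q × X => A z.1 z.2) := by
      rw [(SeparationQuotient.isOpenQuotientMap_mk.prodMap
        IsOpenQuotientMap.id).isQuotientMap.continuous_iff]
      exact continuous_smul
    have hA_meas : Measurable (fun z : Q × X => A z.1 z.2) := hA_cont.measurable
    -- the candidate measure
    set μ₀ : Measure X := Measure.map s ν with hμ₀
    haveI : IsFiniteMeasure μ₀ := ⟨by
      rw [hμ₀, Measure.map_apply hs_meas MeasurableSet.univ, Set.preimage_univ]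
      exact measure_lt_top ν _⟩
    set π : Measure (Q × X) := κ.prod μ₀ with hπ
    set μ : Measure X := Measure.map (fun z : Q × X => A z.1 z.2) π with hμ
    have hμfin : IsFiniteMeasure μ := ⟨by
      rw [hμ, Measure.map_apply hA_meas MeasurableSet.univ, Set.preimage_univ]
      exact measure_lt_top π _⟩
    refine ⟨μ, ⟨hμfin, ?_⟩, ?_, ?_⟩
    · -- finite q-moments
      intro x₀
      have horb : IsCompact (Set.range fun g : G => g • x₀) :=
        isCompact_range (continuous_id.smul continuous_const)
      obtain ⟨R, hR⟩ := (Metric.isBounded_iff_subset_closedBall x₀).1 horb.isBounded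
      have hR' : ∀ g : G, dist (g • x₀) x₀ ≤ R := fun g =>
        Metric.mem_closedBall.1 (hR ⟨g, rfl⟩)
      set R' : ℝ≥0∞ := ENNReal.ofReal R with hR'_def
      have hR'top : R' ≠ ⊤ := ENNReal.ofReal_ne_top
      have h2top : (2:ℝ≥0∞) ^ q ≠ ⊤ := ENNReal.rpow_ne_top_of_nonneg hq0 (by norm_num)
      -- pointwise bound (i)
      have hkey1 : ∀ (ω : Q) (x : X), edist (A ω x) x₀ ≤ edist x x₀ + R' := by
        intro ω x
        obtain ⟨g, rfl⟩ := SeparationQuotient.surjective_mk ω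
        show edist (g • x) x₀ ≤ _
        calc edist (g • x) x₀ ≤ edist (g • x) (g • x₀) + edist (g • x₀) x₀ :=
              edist_triangle _ _ _
          _ = edist x x₀ + edist (g • x₀) x₀ := by rw [(hiso g).edist_eq]
          _ ≤ edist x x₀ + R' := by
              refine add_le_add_right ?_ _
              rw [edist_dist]
              exact ENNReal.ofReal_le_ofReal (hR' g)
      -- pointwise bound (ii)
      have hkey2 : ∀ y : Y, edist (s y) x₀ ≤ edist y (p x₀) + R' := by
        intro y
        have hreal : dist (s y) x₀ ≤ dist y (p x₀) + R := by
          refine le_of_forall_pos_le_add ?_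
          intro ε hε
          have h2 : (⨅ g : G, dist (g • s y) x₀) < dist y (p x₀) + ε := by
            rw [← hp_dist, hs_sec y]
            exact lt_add_of_pos_right _ hε
          obtain ⟨g, hg⟩ := exists_lt_of_ciInf_lt h2
          have e1 : dist (s y) (g⁻¹ • x₀) = dist (g • s y) x₀ := by
            have := (hiso g).dist_eq (s y) (g⁻¹ • x₀)
            simpa [smul_inv_smul] using this.symm
          calc dist (s y) x₀ ≤ dist (s y) (g⁻¹ • x₀) + dist (g⁻¹ • x₀) x₀ :=
                dist_triangle _ _ _
            _ ≤ dist (g • s y) x₀ + R := by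
                rw [e1]; exact add_le_add_right (hR' g⁻¹) _
            _ ≤ dist y (p x₀) + R + ε := by linarith [hg.le]
        calc edist (s y) x₀ = ENNReal.ofReal (dist (s y) x₀) := edist_dist _ _
          _ ≤ ENNReal.ofReal (dist y (p x₀) + R) := ENNReal.ofReal_le_ofReal hreal
          _ ≤ ENNReal.ofReal (dist y (p x₀)) + R' := ENNReal.ofReal_add_le
          _ = edist y (p x₀) + R' := by rw [← edist_dist]
      -- moment of μ₀ is finite
      have hmom0 : ∫⁻ x, edist x x₀ ^ q ∂μ₀ ≠ ⊤ := by
        rw [hμ₀, lintegral_map (hintX x₀) hs_meas]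
        have hb : ∫⁻ y, edist (s y) x₀ ^ q ∂ν ≤
            ∫⁻ y, 2 ^ q * (edist y (p x₀) ^ q + R' ^ q) ∂ν := by
          refine lintegral_mono fun y => ?_
          calc edist (s y) x₀ ^ q ≤ (edist y (p x₀) + R') ^ q :=
                ENNReal.rpow_le_rpow (hkey2 y) hq0
            _ ≤ 2 ^ q * (edist y (p x₀) ^ q + R' ^ q) := ennreal_rpow_add_le _ _ hq0
        refine ne_top_of_le_ne_top ?_ hb
        rw [lintegral_const_mul (f := fun y => edist y (p x₀) ^ q + R' ^ q) _ ((hintY (p x₀)).add measurable_const),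
          lintegral_add_right _ measurable_const, lintegral_const]
        refine ENNReal.mul_ne_top h2top (ENNReal.add_ne_top.2 ⟨hν.2 (p x₀), ?_⟩)
        exact ENNReal.mul_ne_top (ENNReal.rpow_ne_top_of_nonneg hq0 hR'top)
          (measure_ne_top ν _)
      -- moment of μ is finite
      rw [hμ, lintegral_map (hintX x₀) hA_meas]
      have hb : ∫⁻ z : Q × X, edist (A z.1 z.2) x₀ ^ q ∂π ≤
          ∫⁻ z : Q × X, 2 ^ q * (edist z.2 x₀ ^ q + R' ^ q) ∂π := by
        refine lintegral_mono fun z => ?_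
        calc edist (A z.1 z.2) x₀ ^ q ≤ (edist z.2 x₀ + R') ^ q :=
              ENNReal.rpow_le_rpow (hkey1 z.1 z.2) hq0
          _ ≤ 2 ^ q * (edist z.2 x₀ ^ q + R' ^ q) := ennreal_rpow_add_le _ _ hq0
      refine ne_top_of_le_ne_top ?_ hb
      have hmsnd : Measurable fun z : Q × X => 2 ^ q * (edist z.2 x₀ ^ q + R' ^ q) := by
        refine measurable_const.mul (Measurable.add ?_ measurable_const)
        exact (ENNReal.continuous_rpow_const.comp
          (continuous_snd.edist continuous_const)).measurable
      have : ∫⁻ z : Q × X, 2 ^ q * (edist z.2 x₀ ^ q + R' ^ q) ∂π =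
          ∫⁻ x, 2 ^ q * (edist x x₀ ^ q + R' ^ q) ∂μ₀ := by
        have h1 : ∫⁻ z : Q × X, 2 ^ q * (edist z.2 x₀ ^ q + R' ^ q) ∂π =
            ∫⁻ x, 2 ^ q * (edist x x₀ ^ q + R' ^ q) ∂(Measure.map Prod.snd π) := by
          rw [lintegral_map ?_ measurable_snd]
          exact measurable_const.mul (Measurable.add ((ENNReal.continuous_rpow_const.comp
            (continuous_id.edist continuous_const)).measurable) measurable_const)
        rw [h1, hπ, Measure.map_snd_prod, measure_univ, one_smul]
      rw [this, lintegral_const_mul (f := fun x => edist x x₀ ^ q + R' ^ q) _ ((hintX x₀).add measurable_const),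
        lintegral_add_right _ measurable_const, lintegral_const]
      refine ENNReal.mul_ne_top h2top (ENNReal.add_ne_top.2 ⟨hmom0, ?_⟩)
      exact ENNReal.mul_ne_top (ENNReal.rpow_ne_top_of_nonneg hq0 hR'top) (measure_ne_top μ₀ _)
    · -- G-invariance
      intro g
      have hgmeas : Measurable (fun x : X => g • x) := (hiso g).continuous.measurable
      have hTmeas : Measurable (fun z : Q × X => (SeparationQuotient.mk g * z.1, z.2)) :=
        (((continuous_const (y := SeparationQuotient.mk g)).mul continuous_fst).prodMk continuous_snd).measurable
      rw [hμ, Measure.map_map hgmeas hA_meas]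
      have hcomp : (fun x : X => g • x) ∘ (fun z : Q × X => A z.1 z.2)
          = (fun z : Q × X => A z.1 z.2) ∘
            (fun z : Q × X => (SeparationQuotient.mk g * z.1, z.2)) := by
        funext z
        obtain ⟨ω, x⟩ := z
        obtain ⟨h, rfl⟩ := SeparationQuotient.surjective_mk ω
        show g • (h • x) = A (SeparationQuotient.mk g * SeparationQuotient.mk h) x
        rw [← SeparationQuotient.mk_mul]
        show g • (h • x) = (g * h) • x
        rw [mul_smul]
      rw [hcomp, ← Measure.map_map hA_meas hTmeas]
      have hTpres : Measure.map (fun z : Q × X => (SeparationQuotient.mk g * z.1, z.2)) π = π := by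
        rw [hπ]
        exact ((measurePreserving_mul_left κ (SeparationQuotient.mk g)).prod
          (MeasurePreserving.id μ₀)).map_eq
      rw [hTpres]
    · -- pushes forward to ν
      rw [hμ, Measure.map_map hp_meas hA_meas]
      have hcomp : p ∘ (fun z : Q × X => A z.1 z.2) = (p ∘ Prod.snd : Q × X → Y) := by
        funext z
        obtain ⟨ω, x⟩ := z
        obtain ⟨g, rfl⟩ := SeparationQuotient.surjective_mk ω
        show p (g • x) = p x
        exact (hp_fib (g • x) x).2 ⟨g⁻¹, inv_smul_smul g x⟩
      rw [hcomp, ← Measure.map_map hp_meas measurable_snd, hπ, Measure.map_snd_prod,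
        measure_univ, one_smul, hμ₀, Measure.map_map hp_meas hs_meas]
      have : p ∘ s = id := funext hs_sec
      rw [this, Measure.map_id]
end

section
/- Let a compact group G act continuously on the right of a locally compact Polish metric space (X,d) by isometries, let p : X → X/G be the quotient map onto the orbit space X/G equipped with the metric d_{X/G}(x*,y*) = inf_{g∈G} d(xg,y), and let a,b>0, q ≥ 1. Then W_q^{a,b}(p_♯μ, p_♯ν) ≤ W_q^{a,b}(μ,ν) for all μ,ν ∈ M(X). -/
open MeasureTheory ENNReal

section Aux

/-- For finite measures, `μ ≤ (μ - ν) + ν`. -/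
theorem aux_le_sub_add {α} [MeasurableSpace α] (μ ν : Measure α)
    [IsFiniteMeasure μ] [IsFiniteMeasure ν] : μ ≤ (μ - ν) + ν := by
  obtain ⟨s, hs, h1, h2⟩ := MeasureTheory.hahn_decomposition (μ := μ) (ν := ν)
  rw [Measure.le_iff]
  intro t ht
  have hsub : ν.restrict s ≤ μ.restrict s := by
    rw [Measure.le_iff]
    intro u hu
    rw [Measure.restrict_apply hu, Measure.restrict_apply hu]
    exact h1 _ (hu.inter hs) Set.inter_subset_right
  have hkey : (μ - ν) (t ∩ s) = μ (t ∩ s) - ν (t ∩ s) := by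
    have h3 : (μ - ν).restrict s (t ∩ s) = (μ.restrict s - ν.restrict s) (t ∩ s) := by
      rw [Measure.restrict_sub_eq_restrict_sub_restrict hs]
    rw [Measure.restrict_apply (ht.inter hs), Set.inter_assoc, Set.inter_self] at h3
    rw [h3, Measure.sub_apply (ht.inter hs) hsub,
      Measure.restrict_apply (ht.inter hs), Measure.restrict_apply (ht.inter hs),
      Set.inter_assoc, Set.inter_self]
  have h4 : μ (t ∩ s) ≤ (μ - ν) (t ∩ s) + ν (t ∩ s) := by
    rw [hkey]; exact le_tsub_add
  have h5 : μ (t \ s) ≤ ν (t \ s) := h2 _ (ht.diff hs) (fun x hx => hx.2)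
  calc μ t = μ (t ∩ s) + μ (t \ s) := (measure_inter_add_diff t hs).symm
    _ ≤ ((μ - ν) (t ∩ s) + ν (t ∩ s)) + ν (t \ s) := add_le_add h4 h5
    _ = (μ - ν) (t ∩ s) + (ν (t ∩ s) + ν (t \ s)) := by ring
    _ ≤ (μ - ν) t + ν t := by
        rw [measure_inter_add_diff t hs]
        exact add_le_add (measure_mono Set.inter_subset_left) le_rfl

/-- Push-forward does not increase total variation distance. -/
theorem aux_tvE_map_le {X Y : Type*} [MeasurableSpace X] [MetricSpace X]
    [MeasurableSpace Y] [MetricSpace Y] {p : X → Y} (hpm : Measurable p)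
    (μ ν : Measure X) [IsFiniteMeasure μ] [IsFiniteMeasure ν] :
    tvE (Measure.map p μ) (Measure.map p ν) ≤ tvE μ ν := by
  have key : ∀ (μ ν : Measure X), IsFiniteMeasure μ → IsFiniteMeasure ν →
      (Measure.map p μ - Measure.map p ν) Set.univ ≤ (μ - ν) Set.univ := by
    intro μ ν hμ hν
    have h1 : Measure.map p μ - Measure.map p ν ≤ Measure.map p (μ - ν) := by
      apply Measure.sub_le_of_le_add
      calc Measure.map p μ ≤ Measure.map p ((μ - ν) + ν) :=
            Measure.map_mono (aux_le_sub_add μ ν) hpm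
        _ = Measure.map p (μ - ν) + Measure.map p ν := Measure.map_add _ _ hpm
    calc (Measure.map p μ - Measure.map p ν) Set.univ
        ≤ Measure.map p (μ - ν) Set.univ := h1 _
      _ = (μ - ν) Set.univ := by rw [Measure.map_apply hpm MeasurableSet.univ]; simp
  exact add_le_add (key μ ν ‹_› ‹_›) (key ν μ ‹_› ‹_›)

end Aux

/-- **Push-forward to the quotient does not increase `W_q^{a,b}`** (Theorem 1.4 (2)).
For an isometric continuous action of a compact group `G` on a locally compact Polish
metric space `X`, with `p : X → Y = X/G` the quotient map onto the orbit space equipped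
with the metric `d(x*,y*) = inf_g d(g•x, y)`, one has
`W_q^{a,b}(p_♯μ, p_♯ν) ≤ W_q^{a,b}(μ,ν)` for all finite measures `μ, ν` on `X`. -/
theorem genW_map_quotient_le
    {G : Type*} [Group G] [TopologicalSpace G] [IsTopologicalGroup G] [CompactSpace G]
    {X : Type*} [MeasurableSpace X] [MetricSpace X] [BorelSpace X]
    [TopologicalSpace.SeparableSpace X] [CompleteSpace X] [LocallyCompactSpace X]
    [MulAction G X] [ContinuousSMul G X]
    (hiso : ∀ g : G, Isometry (fun x : X => g • x))
    {Y : Type*} [MeasurableSpace Y] [MetricSpace Y] [BorelSpace Y]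
    (p : X → Y) (hp_cont : Continuous p) (hp_surj : Function.Surjective p)
    (hp_dist : ∀ x y : X, dist (p x) (p y) = ⨅ g : G, dist (g • x) y)
    (hp_fib : ∀ x y : X, p x = p y ↔ ∃ g : G, g • x = y)
    (a b q : ℝ) (ha : 0 < a) (hb : 0 < b) (hq : 1 ≤ q)
    (μ ν : Measure X) [IsFiniteMeasure μ] [IsFiniteMeasure ν] :
    genW a b q (Measure.map p μ) (Measure.map p ν) ≤ genW a b q μ ν := by
  have hpm : Measurable p := hp_cont.measurable
  haveI : TopologicalSpace.SeparableSpace Y := hp_surj.denseRange.separableSpace hp_cont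
  haveI : SecondCountableTopology Y := UniformSpace.secondCountable_of_separable Y
  have hq0 : (0 : ℝ) < q := lt_of_lt_of_le one_pos hq
  -- p is 1-Lipschitz
  have hlip : ∀ x y : X, edist (p x) (p y) ≤ edist x y := by
    intro x y
    rw [edist_dist, edist_dist]
    apply ENNReal.ofReal_le_ofReal
    rw [hp_dist]
    have : dist ((1 : G) • x) y = dist x y := by rw [one_smul]
    calc (⨅ g : G, dist (g • x) y) ≤ dist ((1 : G) • x) y :=
          ciInf_le ⟨0, fun v ⟨g, hg⟩ => hg ▸ dist_nonneg⟩ (1 : G)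
      _ = dist x y := this
  -- the ENNReal inequality
  have main : genWE a b q (Measure.map p μ) (Measure.map p ν) ≤ genWE a b q μ ν := by
    apply le_iInf; intro μ'
    apply le_iInf; intro ν'
    apply le_iInf; intro hμ'
    apply le_iInf; intro hν'
    apply le_iInf; intro hmass
    haveI := hμ'.1; haveI := hν'.1
    -- the pushed candidates
    have hμ'p : MemMp q (Measure.map p μ') := by
      refine ⟨inferInstance, fun y₀ => ?_⟩
      obtain ⟨x₀, rfl⟩ := hp_surj y₀
      have hmeas : Measurable fun y : Y => edist y (p x₀) ^ q :=
        (measurable_id.edist measurable_const).pow_const q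
      rw [MeasureTheory.lintegral_map hmeas hpm]
      refine ne_top_of_le_ne_top (hμ'.2 x₀) (lintegral_mono fun x => ?_)
      exact ENNReal.rpow_le_rpow (hlip x x₀) hq0.le
    have hν'p : MemMp q (Measure.map p ν') := by
      refine ⟨inferInstance, fun y₀ => ?_⟩
      obtain ⟨x₀, rfl⟩ := hp_surj y₀
      have hmeas : Measurable fun y : Y => edist y (p x₀) ^ q :=
        (measurable_id.edist measurable_const).pow_const q
      rw [MeasureTheory.lintegral_map hmeas hpm]
      refine ne_top_of_le_ne_top (hν'.2 x₀) (lintegral_mono fun x => ?_)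
      exact ENNReal.rpow_le_rpow (hlip x x₀) hq0.le
    have hmass' : Measure.map p μ' Set.univ = Measure.map p ν' Set.univ := by
      rw [Measure.map_apply hpm MeasurableSet.univ, Measure.map_apply hpm MeasurableSet.univ]
      simpa using hmass
    -- Wasserstein comparison
    have hW : WpE q (Measure.map p μ') (Measure.map p ν') ≤ WpE q μ' ν' := by
      unfold WpE
      apply ENNReal.rpow_le_rpow _ (by positivity)
      rw [Measure.map_apply hpm MeasurableSet.univ, Set.preimage_univ]
      apply mul_le_mul_right
      apply le_iInf
      rintro ⟨π, hπ1, hπ2, hπ3⟩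
      haveI := hπ1
      have hppm : Measurable (Prod.map p p) := hpm.prodMap hpm
      have hcoup : IsCoupling (Measure.map p μ') (Measure.map p ν')
          (Measure.map (Prod.map p p) π) := by
        refine ⟨Measure.isProbabilityMeasure_map hppm.aemeasurable, ?_, ?_⟩
        · intro A hA
          rw [Measure.map_apply hpm MeasurableSet.univ, Set.preimage_univ,
            Measure.map_apply hppm (hA.prod MeasurableSet.univ),
            Set.preimage_prod_map_prod, Set.preimage_univ,
            Measure.map_apply hpm hA]
          exact hπ2 _ (hpm hA)
        · intro B hB
          rw [Measure.map_apply hpm MeasurableSet.univ, Set.preimage_univ,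
            Measure.map_apply hppm (MeasurableSet.univ.prod hB),
            Set.preimage_prod_map_prod, Set.preimage_univ,
            Measure.map_apply hpm hB]
          exact hπ3 _ (hpm hB)
      refine iInf_le_of_le ⟨_, hcoup⟩ ?_
      have hmeas : Measurable fun z : Y × Y => edist z.1 z.2 ^ q :=
        (measurable_fst.edist measurable_snd).pow_const q
      rw [MeasureTheory.lintegral_map hmeas hppm]
      exact lintegral_mono fun z => ENNReal.rpow_le_rpow (hlip z.1 z.2) hq0.le
    refine iInf_le_of_le (Measure.map p μ') <| iInf_le_of_le (Measure.map p ν') <|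
      iInf_le_of_le hμ'p <| iInf_le_of_le hν'p <| iInf_le_of_le hmass' ?_
    refine add_le_add (add_le_add (mul_le_mul_right ?_ _) (mul_le_mul_right ?_ _))
      (mul_le_mul_right hW _)
    · exact aux_tvE_map_le hpm μ μ'
    · exact aux_tvE_map_le hpm ν ν'
  -- finiteness of the right-hand side
  have hfin : genWE a b q μ ν ≠ ∞ := by
    have h0 : MemMp q (0 : Measure X) := ⟨inferInstance, fun x₀ => by simp⟩
    have hle : genWE a b q μ ν ≤
        ENNReal.ofReal a * tvE μ 0 + ENNReal.ofReal a * tvE ν 0 +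
          ENNReal.ofReal b * WpE q (0 : Measure X) 0 :=
      iInf_le_of_le 0 <| iInf_le_of_le 0 <| iInf_le_of_le h0 <| iInf_le_of_le h0 <|
        iInf_le_of_le rfl le_rfl
    have hW0 : WpE q (0 : Measure X) 0 = 0 := by
      unfold WpE
      rw [show ((0 : Measure X) Set.univ) = 0 from rfl, zero_mul]
      exact ENNReal.zero_rpow_of_pos (by positivity)
    have htv : ∀ (ρ : Measure X), IsFiniteMeasure ρ → tvE ρ 0 ≠ ∞ := by
      intro ρ hρ
      have h1 : ρ - 0 = ρ := by
        apply le_antisymm Measure.sub_le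
        have := aux_le_sub_add ρ (0 : Measure X)
        simpa using this
      unfold tvE
      rw [h1, Measure.zero_sub]
      simp [measure_ne_top]
    refine ne_top_of_le_ne_top ?_ hle
    rw [hW0, mul_zero, add_zero]
    exact ENNReal.add_ne_top.2 ⟨ENNReal.mul_ne_top ofReal_ne_top (htv μ ‹_›),
      ENNReal.mul_ne_top ofReal_ne_top (htv ν ‹_›)⟩
  exact ENNReal.toReal_mono hfin main
end

section
/- Let (X,d) be a Polish metric space and a,b>0. For all finite nonnegative Borel measures μ₁,μ₂ on X, W₁^{a,b}(μ₁,μ₂) ≥ sup over (φ₁,φ₂) ∈ Φ_W of Σ_{i=1,2} ∫_X I(φᵢ(x)) dμᵢ(x), where I(φ) = inf_{s≥0}(sφ + a|1−s|) and Φ_W is the set of pairs (φ₁,φ₂) of bounded continuous functions on X with φ₁(x)+φ₂(y) ≤ b·d(x,y) and φ₁(x), φ₂(y) ≥ −a for all x,y ∈ X. -/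
open MeasureTheory ENNReal

section Aux

open Filter

/-- `I(φ) = min φ a` whenever `-a ≤ φ` and `0 ≤ a`. -/
lemma Idual_eq_min {a φ : ℝ} (ha : 0 ≤ a) (h : -a ≤ φ) : Idual a φ = min φ a := by
  have hbdd : ∀ v ∈ {v : ℝ | ∃ s : ℝ, 0 ≤ s ∧ v = s * φ + a * |1 - s|}, min φ a ≤ v := by
    rintro v ⟨s, hs, rfl⟩
    rcases le_total s 1 with hs1 | hs1
    · rw [abs_of_nonneg (by linarith)]
      rcases le_total φ a with hφa | hφa
      · calc min φ a ≤ φ := min_le_left _ _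
          _ ≤ s * φ + a * (1 - s) := by nlinarith
      · calc min φ a ≤ a := min_le_right _ _
          _ ≤ s * φ + a * (1 - s) := by nlinarith
    · rw [abs_of_nonpos (by linarith)]
      calc min φ a ≤ φ := min_le_left _ _
        _ ≤ s * φ + a * -(1 - s) := by nlinarith
  refine le_antisymm ?_ (le_csInf ⟨φ, 1, zero_le_one, by simp⟩ hbdd)
  exact le_min (csInf_le ⟨_, hbdd⟩ ⟨1, zero_le_one, by simp⟩)
    (csInf_le ⟨_, hbdd⟩ ⟨0, le_refl 0, by simp⟩)

/-- A continuous function bounded by a constant is integrable w.r.t. a finite measure. -/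
lemma integrable_of_bound {Y : Type*} [MeasurableSpace Y] [TopologicalSpace Y]
    [OpensMeasurableSpace Y] (μ : Measure Y) [IsFiniteMeasure μ] {f : Y → ℝ}
    (hf : Continuous f) {C : ℝ} (hC : ∀ x, ‖f x‖ ≤ C) : Integrable f μ :=
  Integrable.mono' (integrable_const C) hf.aestronglyMeasurable (Eventually.of_forall hC)

lemma tvE_ne_top {Y : Type*} [MeasurableSpace Y] (μ ν : Measure Y)
    [IsFiniteMeasure μ] [IsFiniteMeasure ν] : tvE μ ν ≠ ⊤ := by
  have h1 : (μ - ν) Set.univ ≤ μ Set.univ := Measure.le_iff'.1 Measure.sub_le _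
  have h2 : (ν - μ) Set.univ ≤ ν Set.univ := Measure.le_iff'.1 Measure.sub_le _
  exact ENNReal.add_ne_top.2 ⟨(h1.trans_lt (measure_lt_top _ _)).ne,
    (h2.trans_lt (measure_lt_top _ _)).ne⟩

lemma integral_sub_integral_le_of_le {Y : Type*} [MeasurableSpace Y] {ρ ρ' : Measure Y}
    [IsFiniteMeasure ρ] (hle : ρ' ≤ ρ) {f : Y → ℝ} (hf : Integrable f ρ) {C : ℝ}
    (hC : ∀ x, ‖f x‖ ≤ C) :
    ∫ x, f x ∂ρ - ∫ x, f x ∂ρ' ≤ C * ((ρ - ρ') Set.univ).toReal := by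
  haveI : IsFiniteMeasure ρ' := isFiniteMeasure_of_le ρ hle
  have h1 : ρ - ρ' + ρ' = ρ := Measure.sub_add_cancel_of_le hle
  have hsub : Integrable f (ρ - ρ') := hf.mono_measure Measure.sub_le
  have h' : Integrable f ρ' := hf.mono_measure hle
  have hdecomp : ∫ x, f x ∂ρ = ∫ x, f x ∂(ρ - ρ') + ∫ x, f x ∂ρ' := by
    conv_lhs => rw [← h1]
    exact integral_add_measure hsub h'
  have hnorm : ‖∫ x, f x ∂(ρ - ρ')‖ ≤ C * ((ρ - ρ') Set.univ).toReal :=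
    norm_integral_le_of_norm_le_const (Eventually.of_forall hC)
  have : ∫ x, f x ∂(ρ - ρ') ≤ C * ((ρ - ρ') Set.univ).toReal :=
    (le_abs_self _).trans (by rw [← Real.norm_eq_abs]; exact hnorm)
  linarith [hdecomp]

/-- The total-variation bound: `∫ f dμ ≤ ∫ f dν + C · |μ - ν|` for `‖f‖ ≤ C`. -/
lemma integral_le_integral_add_tv {Y : Type*} [MeasurableSpace Y] (μ ν : Measure Y)
    [IsFiniteMeasure μ] [IsFiniteMeasure ν] {f : Y → ℝ} (hfμ : Integrable f μ)
    (hfν : Integrable f ν) {C : ℝ} (hC0 : 0 ≤ C) (hC : ∀ x, ‖f x‖ ≤ C) :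
    ∫ x, f x ∂μ ≤ ∫ x, f x ∂ν + C * tv μ ν := by
  obtain ⟨s, hs, h1, h2⟩ := hahn_decomposition (μ := μ) (ν := ν)
  have hνμ : ν.restrict s ≤ μ.restrict s := by
    refine Measure.le_iff.2 fun t ht => ?_
    rw [Measure.restrict_apply ht, Measure.restrict_apply ht]
    exact h1 _ (ht.inter hs) Set.inter_subset_right
  have hμν : μ.restrict sᶜ ≤ ν.restrict sᶜ := by
    refine Measure.le_iff.2 fun t ht => ?_
    rw [Measure.restrict_apply ht, Measure.restrict_apply ht]
    exact h2 _ (ht.inter hs.compl) Set.inter_subset_right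
  have hμt : (μ - ν) Set.univ ≠ ⊤ :=
    ((Measure.le_iff'.1 Measure.sub_le _).trans_lt (measure_lt_top μ _)).ne
  have hνt : (ν - μ) Set.univ ≠ ⊤ :=
    ((Measure.le_iff'.1 Measure.sub_le _).trans_lt (measure_lt_top ν _)).ne
  have key1 : ∫ x in s, f x ∂μ - ∫ x in s, f x ∂ν ≤ C * ((μ - ν) Set.univ).toReal := by
    have e : (μ.restrict s - ν.restrict s) Set.univ = (μ - ν) s := by
      rw [← Measure.restrict_sub_eq_restrict_sub_restrict hs, Measure.restrict_apply_univ]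
    have h := integral_sub_integral_le_of_le hνμ hfμ.restrict hC
    rw [e] at h
    refine h.trans (mul_le_mul_of_nonneg_left ?_ hC0)
    exact ENNReal.toReal_mono hμt (measure_mono (Set.subset_univ s))
  have key2 : ∫ x in sᶜ, f x ∂μ - ∫ x in sᶜ, f x ∂ν ≤ C * ((ν - μ) Set.univ).toReal := by
    have e : (ν.restrict sᶜ - μ.restrict sᶜ) Set.univ = (ν - μ) sᶜ := by
      rw [← Measure.restrict_sub_eq_restrict_sub_restrict hs.compl, Measure.restrict_apply_univ]
    have h := integral_sub_integral_le_of_le (f := fun x => -f x) hμν hfν.restrict.neg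
      (fun x => by rw [norm_neg]; exact hC x)
    rw [e, integral_neg, integral_neg] at h
    have h' : ∫ x in sᶜ, f x ∂μ - ∫ x in sᶜ, f x ∂ν ≤ C * ((ν - μ) sᶜ).toReal := by linarith
    refine h'.trans (mul_le_mul_of_nonneg_left ?_ hC0)
    exact ENNReal.toReal_mono hνt (measure_mono (Set.subset_univ _))
  have hμdec : ∫ x in s, f x ∂μ + ∫ x in sᶜ, f x ∂μ = ∫ x, f x ∂μ := integral_add_compl hs hfμ
  have hνdec : ∫ x in s, f x ∂ν + ∫ x in sᶜ, f x ∂ν = ∫ x, f x ∂ν := integral_add_compl hs hfν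
  have htv : tv μ ν = ((μ - ν) Set.univ).toReal + ((ν - μ) Set.univ).toReal := by
    rw [tv, tvE, ENNReal.toReal_add hμt hνt]
  rw [htv]
  linarith

/-- The coupling step: the dual pairing against `μ', ν'` is bounded by `b · W₁(μ',ν')`. -/
lemma dual_pair_le_WpE {X : Type*} [MeasurableSpace X] [MetricSpace X] [BorelSpace X]
    [SecondCountableTopology X] {a b : ℝ} (ha : 0 < a) (hb : 0 < b)
    (μ' ν' : Measure X) [IsFiniteMeasure μ'] [IsFiniteMeasure ν']
    (hmass : μ' Set.univ = ν' Set.univ)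
    (ψ₁ ψ₂ : X → ℝ) (hc₁ : Continuous ψ₁) (hc₂ : Continuous ψ₂)
    (hb₁ : ∀ x, ‖ψ₁ x‖ ≤ a) (hb₂ : ∀ x, ‖ψ₂ x‖ ≤ a)
    (hlt : ∀ x y, ψ₁ x + ψ₂ y ≤ b * dist x y) :
    ENNReal.ofReal (∫ x, ψ₁ x ∂μ' + ∫ x, ψ₂ x ∂ν') ≤ ENNReal.ofReal b * WpE 1 μ' ν' := by
  by_cases hm0 : μ' Set.univ = 0
  · have hμ'0 : μ' = 0 := Measure.measure_univ_eq_zero.1 hm0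
    have hν'0 : ν' = 0 := Measure.measure_univ_eq_zero.1 (hmass ▸ hm0)
    simp [hμ'0, hν'0]
  · have hmt : μ' Set.univ ≠ ⊤ := measure_ne_top μ' _
    have hWpE : WpE 1 μ' ν' = μ' Set.univ *
        ⨅ π : {π : Measure (X × X) // IsCoupling μ' ν' π}, ∫⁻ z, edist z.1 z.2 ∂π.1 := by
      rw [WpE]
      norm_num [ENNReal.rpow_one]
    rw [hWpE, ← mul_assoc]
    have hc0 : ENNReal.ofReal b * μ' Set.univ ≠ 0 :=
      mul_ne_zero (ENNReal.ofReal_pos.2 hb).ne' hm0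
    have hct : ENNReal.ofReal b * μ' Set.univ ≠ ⊤ :=
      ENNReal.mul_ne_top ENNReal.ofReal_ne_top hmt
    have key : ∀ π : {π : Measure (X × X) // IsCoupling μ' ν' π},
        ENNReal.ofReal (∫ x, ψ₁ x ∂μ' + ∫ x, ψ₂ x ∂ν') ≤
          (ENNReal.ofReal b * μ' Set.univ) * ∫⁻ z, edist z.1 z.2 ∂π.1 := by
      rintro ⟨π, hπ⟩
      haveI := hπ.1
      by_cases hcost : ∫⁻ z, edist z.1 z.2 ∂π = ⊤
      · rw [hcost, ENNReal.mul_top hc0]; exact le_top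
      · have hDc : Continuous fun z : X × X => dist z.1 z.2 := continuous_dist
        have hDint : Integrable (fun z : X × X => dist z.1 z.2) π := by
          refine ⟨hDc.aestronglyMeasurable, ?_⟩
          have he : ∀ z : X × X, ‖dist z.1 z.2‖ₑ = edist z.1 z.2 := fun z => by
            rw [edist_dist]; exact Real.enorm_eq_ofReal dist_nonneg
          rw [HasFiniteIntegral]
          simp only [he]
          exact lt_top_iff_ne_top.2 hcost
        have hμ'eq : μ' = μ' Set.univ • π.map Prod.fst := by
          ext A hA
          rw [Measure.smul_apply, smul_eq_mul, Measure.map_apply measurable_fst hA,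
            ← Set.prod_univ]
          exact (hπ.2.1 A hA).symm
        have hν'eq : ν' = μ' Set.univ • π.map Prod.snd := by
          ext B hB
          rw [Measure.smul_apply, smul_eq_mul, Measure.map_apply measurable_snd hB,
            ← Set.univ_prod, hmass]
          exact (hπ.2.2 B hB).symm
        have hint1 : Integrable (fun z : X × X => ψ₁ z.1) π :=
          integrable_of_bound π (hc₁.comp continuous_fst) (fun z => hb₁ z.1)
        have hint2 : Integrable (fun z : X × X => ψ₂ z.2) π :=
          integrable_of_bound π (hc₂.comp continuous_snd) (fun z => hb₂ z.2)
        have hI1 : ∫ x, ψ₁ x ∂μ' = (μ' Set.univ).toReal * ∫ z : X × X, ψ₁ z.1 ∂π := by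
          conv_lhs => rw [hμ'eq]
          rw [integral_smul_measure,
            integral_map measurable_fst.aemeasurable hc₁.aestronglyMeasurable, smul_eq_mul]
        have hI2 : ∫ x, ψ₂ x ∂ν' = (μ' Set.univ).toReal * ∫ z : X × X, ψ₂ z.2 ∂π := by
          conv_lhs => rw [hν'eq]
          rw [integral_smul_measure,
            integral_map measurable_snd.aemeasurable hc₂.aestronglyMeasurable, smul_eq_mul]
        have hsum : ∫ x, ψ₁ x ∂μ' + ∫ x, ψ₂ x ∂ν' =
            (μ' Set.univ).toReal * ∫ z : X × X, (ψ₁ z.1 + ψ₂ z.2) ∂π := by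
          rw [hI1, hI2, integral_add hint1 hint2, mul_add]
        have hmono : ∫ z : X × X, (ψ₁ z.1 + ψ₂ z.2) ∂π ≤
            ∫ z : X × X, b * dist z.1 z.2 ∂π := by
          refine integral_mono (hint1.add hint2) (hDint.const_mul b) fun z => ?_
          exact hlt z.1 z.2
        have hDeq : ∫ z : X × X, dist z.1 z.2 ∂π = (∫⁻ z, edist z.1 z.2 ∂π).toReal := by
          rw [integral_eq_lintegral_of_nonneg_ae (Eventually.of_forall fun z => dist_nonneg)
            hDc.aestronglyMeasurable]
          congr 1
          exact lintegral_congr fun z => (edist_dist _ _).symm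
        have hfinal : ∫ x, ψ₁ x ∂μ' + ∫ x, ψ₂ x ∂ν' ≤
            b * ((μ' Set.univ).toReal * (∫⁻ z, edist z.1 z.2 ∂π).toReal) := by
          rw [hsum]
          calc (μ' Set.univ).toReal * ∫ z : X × X, (ψ₁ z.1 + ψ₂ z.2) ∂π
              ≤ (μ' Set.univ).toReal * ∫ z : X × X, b * dist z.1 z.2 ∂π :=
                mul_le_mul_of_nonneg_left hmono ENNReal.toReal_nonneg
            _ = b * ((μ' Set.univ).toReal * (∫⁻ z, edist z.1 z.2 ∂π).toReal) := by
                rw [integral_const_mul, hDeq]; ring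
        calc ENNReal.ofReal (∫ x, ψ₁ x ∂μ' + ∫ x, ψ₂ x ∂ν')
            ≤ ENNReal.ofReal (b * ((μ' Set.univ).toReal *
                (∫⁻ z, edist z.1 z.2 ∂π).toReal)) := ENNReal.ofReal_le_ofReal hfinal
          _ = (ENNReal.ofReal b * μ' Set.univ) * ∫⁻ z, edist z.1 z.2 ∂π := by
              rw [ENNReal.ofReal_mul hb.le, ENNReal.ofReal_mul ENNReal.toReal_nonneg,
                ENNReal.ofReal_toReal hmt, ENNReal.ofReal_toReal hcost, mul_assoc]
    have hdiv : ENNReal.ofReal (∫ x, ψ₁ x ∂μ' + ∫ x, ψ₂ x ∂ν') /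
        (ENNReal.ofReal b * μ' Set.univ) ≤
        ⨅ π : {π : Measure (X × X) // IsCoupling μ' ν' π}, ∫⁻ z, edist z.1 z.2 ∂π.1 :=
      le_iInf fun π => ENNReal.div_le_of_le_mul ((key π).trans_eq (mul_comm _ _))
    calc ENNReal.ofReal (∫ x, ψ₁ x ∂μ' + ∫ x, ψ₂ x ∂ν')
        = ENNReal.ofReal (∫ x, ψ₁ x ∂μ' + ∫ x, ψ₂ x ∂ν') /
            (ENNReal.ofReal b * μ' Set.univ) * (ENNReal.ofReal b * μ' Set.univ) :=
          (ENNReal.div_mul_cancel hc0 hct).symm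
      _ ≤ (⨅ π : {π : Measure (X × X) // IsCoupling μ' ν' π}, ∫⁻ z, edist z.1 z.2 ∂π.1) *
            (ENNReal.ofReal b * μ' Set.univ) := mul_le_mul_left hdiv _
      _ = (ENNReal.ofReal b * μ' Set.univ) *
            ⨅ π : {π : Measure (X × X) // IsCoupling μ' ν' π}, ∫⁻ z, edist z.1 z.2 ∂π.1 :=
          mul_comm _ _

end Aux

/-- **Easy inequality in the Kantorovich duality for `W₁^{a,b}`** (Lemma 5.2).
For every `(φ₁,φ₂) ∈ Φ_W`, `W₁^{a,b}(μ₁,μ₂) ≥ Σᵢ ∫ I(φᵢ) dμᵢ`; that is,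
`W₁^{a,b}(μ₁,μ₂)` dominates the dual supremum. -/
theorem genW_ge_dual
    {X : Type*} [MeasurableSpace X] [MetricSpace X] [BorelSpace X]
    [TopologicalSpace.SeparableSpace X] [CompleteSpace X]
    (a b : ℝ) (ha : 0 < a) (hb : 0 < b)
    (μ₁ μ₂ : Measure X) [IsFiniteMeasure μ₁] [IsFiniteMeasure μ₂]
    (φ₁ φ₂ : BoundedContinuousFunction X ℝ)
    (hφ : ∀ x y : X, φ₁ x + φ₂ y ≤ b * dist x y)
    (hφ₁ : ∀ x : X, -a ≤ φ₁ x) (hφ₂ : ∀ y : X, -a ≤ φ₂ y) :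
    ∫ x, Idual a (φ₁ x) ∂μ₁ + ∫ x, Idual a (φ₂ x) ∂μ₂ ≤ genW a b 1 μ₁ μ₂ := by
  haveI : SecondCountableTopology X := UniformSpace.secondCountable_of_separable X
  set ψ₁ : X → ℝ := fun x => min (φ₁ x) a with hψ₁def
  set ψ₂ : X → ℝ := fun x => min (φ₂ x) a with hψ₂def
  have hc₁ : Continuous ψ₁ := (map_continuous φ₁).min continuous_const
  have hc₂ : Continuous ψ₂ := (map_continuous φ₂).min continuous_const
  have hb₁ : ∀ x, ‖ψ₁ x‖ ≤ a := fun x => by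
    rw [Real.norm_eq_abs, abs_le]
    exact ⟨le_min (hφ₁ x) (by linarith), min_le_right _ _⟩
  have hb₂ : ∀ x, ‖ψ₂ x‖ ≤ a := fun x => by
    rw [Real.norm_eq_abs, abs_le]
    exact ⟨le_min (hφ₂ x) (by linarith), min_le_right _ _⟩
  have hlt : ∀ x y, ψ₁ x + ψ₂ y ≤ b * dist x y := fun x y =>
    (add_le_add (min_le_left _ _) (min_le_left _ _)).trans (hφ x y)
  have e1 : ∫ x, Idual a (φ₁ x) ∂μ₁ = ∫ x, ψ₁ x ∂μ₁ :=
    integral_congr_ae (Filter.Eventually.of_forall fun x => Idual_eq_min ha.le (hφ₁ x))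
  have e2 : ∫ x, Idual a (φ₂ x) ∂μ₂ = ∫ x, ψ₂ x ∂μ₂ :=
    integral_congr_ae (Filter.Eventually.of_forall fun x => Idual_eq_min ha.le (hφ₂ x))
  rw [e1, e2]
  have main : ENNReal.ofReal (∫ x, ψ₁ x ∂μ₁ + ∫ x, ψ₂ x ∂μ₂) ≤ genWE a b 1 μ₁ μ₂ := by
    refine le_iInf fun μ' => le_iInf fun ν' => le_iInf fun hμ'p => le_iInf fun hν'p =>
      le_iInf fun hmass => ?_
    haveI := hμ'p.1
    haveI := hν'p.1
    have hB1 : ∫ x, ψ₁ x ∂μ₁ - ∫ x, ψ₁ x ∂μ' ≤ a * tv μ₁ μ' := by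
      have := integral_le_integral_add_tv μ₁ μ' (integrable_of_bound μ₁ hc₁ hb₁)
        (integrable_of_bound μ' hc₁ hb₁) ha.le hb₁
      linarith
    have hB2 : ∫ x, ψ₂ x ∂μ₂ - ∫ x, ψ₂ x ∂ν' ≤ a * tv μ₂ ν' := by
      have := integral_le_integral_add_tv μ₂ ν' (integrable_of_bound μ₂ hc₂ hb₂)
        (integrable_of_bound ν' hc₂ hb₂) ha.le hb₂
      linarith
    have hR3 : ENNReal.ofReal (∫ x, ψ₁ x ∂μ' + ∫ x, ψ₂ x ∂ν') ≤
        ENNReal.ofReal b * WpE 1 μ' ν' :=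
      dual_pair_le_WpE ha hb μ' ν' hmass ψ₁ ψ₂ hc₁ hc₂ hb₁ hb₂ hlt
    have hR1 : ENNReal.ofReal (∫ x, ψ₁ x ∂μ₁ - ∫ x, ψ₁ x ∂μ') ≤
        ENNReal.ofReal a * tvE μ₁ μ' := by
      calc ENNReal.ofReal (∫ x, ψ₁ x ∂μ₁ - ∫ x, ψ₁ x ∂μ')
          ≤ ENNReal.ofReal (a * tv μ₁ μ') := ENNReal.ofReal_le_ofReal hB1
        _ = ENNReal.ofReal a * ENNReal.ofReal (tv μ₁ μ') := ENNReal.ofReal_mul ha.le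
        _ = ENNReal.ofReal a * tvE μ₁ μ' := by
            rw [tv, ENNReal.ofReal_toReal (tvE_ne_top _ _)]
    have hR2 : ENNReal.ofReal (∫ x, ψ₂ x ∂μ₂ - ∫ x, ψ₂ x ∂ν') ≤
        ENNReal.ofReal a * tvE μ₂ ν' := by
      calc ENNReal.ofReal (∫ x, ψ₂ x ∂μ₂ - ∫ x, ψ₂ x ∂ν')
          ≤ ENNReal.ofReal (a * tv μ₂ ν') := ENNReal.ofReal_le_ofReal hB2
        _ = ENNReal.ofReal a * ENNReal.ofReal (tv μ₂ ν') := ENNReal.ofReal_mul ha.le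
        _ = ENNReal.ofReal a * tvE μ₂ ν' := by
            rw [tv, ENNReal.ofReal_toReal (tvE_ne_top _ _)]
    calc ENNReal.ofReal (∫ x, ψ₁ x ∂μ₁ + ∫ x, ψ₂ x ∂μ₂)
        = ENNReal.ofReal ((∫ x, ψ₁ x ∂μ₁ - ∫ x, ψ₁ x ∂μ') +
            ((∫ x, ψ₂ x ∂μ₂ - ∫ x, ψ₂ x ∂ν') + (∫ x, ψ₁ x ∂μ' + ∫ x, ψ₂ x ∂ν'))) := by
          ring_nf
      _ ≤ ENNReal.ofReal (∫ x, ψ₁ x ∂μ₁ - ∫ x, ψ₁ x ∂μ') +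
            (ENNReal.ofReal (∫ x, ψ₂ x ∂μ₂ - ∫ x, ψ₂ x ∂ν') +
              ENNReal.ofReal (∫ x, ψ₁ x ∂μ' + ∫ x, ψ₂ x ∂ν')) :=
          ENNReal.ofReal_add_le.trans (add_le_add le_rfl ENNReal.ofReal_add_le)
      _ ≤ ENNReal.ofReal a * tvE μ₁ μ' + (ENNReal.ofReal a * tvE μ₂ ν' +
            ENNReal.ofReal b * WpE 1 μ' ν') := add_le_add hR1 (add_le_add hR2 hR3)
      _ = ENNReal.ofReal a * tvE μ₁ μ' + ENNReal.ofReal a * tvE μ₂ ν' +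
            ENNReal.ofReal b * WpE 1 μ' ν' := (add_assoc _ _ _).symm
  have hfin : genWE a b 1 μ₁ μ₂ ≠ ⊤ := by
    have hle : genWE a b 1 μ₁ μ₂ ≤ ENNReal.ofReal a * tvE μ₁ 0 + ENNReal.ofReal a * tvE μ₂ 0 +
        ENNReal.ofReal b * WpE 1 (0 : Measure X) 0 := by
      refine iInf_le_of_le 0 (iInf_le_of_le 0 (iInf_le_of_le ?_ (iInf_le_of_le ?_
        (iInf_le_of_le rfl le_rfl))))
      · exact ⟨inferInstance, fun x₀ => by simp⟩
      · exact ⟨inferInstance, fun x₀ => by simp⟩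
    have hW : WpE (X := X) 1 (0 : Measure X) 0 = 0 := by
      rw [WpE]
      norm_num [ENNReal.rpow_one]
    rw [hW, mul_zero, add_zero] at hle
    refine ne_top_of_le_ne_top ?_ hle
    exact ENNReal.add_ne_top.2 ⟨ENNReal.mul_ne_top ENNReal.ofReal_ne_top (tvE_ne_top _ _),
      ENNReal.mul_ne_top ENNReal.ofReal_ne_top (tvE_ne_top _ _)⟩
  rcases le_or_gt (∫ x, ψ₁ x ∂μ₁ + ∫ x, ψ₂ x ∂μ₂) 0 with hS0 | hS0
  · exact hS0.trans ENNReal.toReal_nonneg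
  · have h := ENNReal.toReal_mono hfin main
    rwa [ENNReal.toReal_ofReal hS0.le] at h
end
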